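/- arXiv:1906.09347 — 6 statements merged into one kernel-verified Lean document; each statement's English description precedes it below -/
import Mathlib

section
/- Suppose μ₁ < μ₂ and −1 < ρ < 0. Then the infimum of g(t,s) over (t,s) ∈ (0,∞)² equals 4(μ₂+(1−2ρ)μ₁), and ((1−2ρ)/μ₁, 1/(μ₂−2ρμ₁)) is the unique minimizer of g on (0,∞)². -/
open Matrix

/-- The covariance matrix of `(X₁(t), X₂(s))`. -/
noncomputable def covM (ρ t s : ℝ) : Matrix (Fin 2) (Fin 2) ℝ :=
  !![t, ρ * min t s; ρ * min t s, s]

/-- The quadratic form `(x,y) Σ_{ts}⁻¹ (x,y)ᵀ`. -/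
noncomputable def quadF (ρ t s x y : ℝ) : ℝ :=
  dotProduct ![x, y] ((covM ρ t s)⁻¹.mulVec ![x, y])

/-- `g(t,s) = inf{ (x,y) Σ_{ts}⁻¹ (x,y)ᵀ : x ≥ 1+μ₁t, y ≥ 1+μ₂s }`. -/
noncomputable def gFun (μ₁ μ₂ ρ t s : ℝ) : ℝ :=
  sInf { q : ℝ | ∃ x y : ℝ, 1 + μ₁ * t ≤ x ∧ 1 + μ₂ * s ≤ y ∧ q = quadF ρ t s x y }

lemma quadF_eq (ρ t s x y : ℝ) (hd : (t * s - (ρ * min t s)^2) ≠ 0) :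
    quadF ρ t s x y = (s*x^2 - 2*(ρ*min t s)*x*y + t*y^2) / (t*s - (ρ*min t s)^2) := by
  have hdet : (covM ρ t s).det = t * s - (ρ * min t s)^2 := by
    simp [covM, Matrix.det_fin_two_of]; ring
  have hinv : (covM ρ t s)⁻¹
      = (t*s - (ρ*min t s)^2)⁻¹ • !![s, -(ρ * min t s); -(ρ * min t s), t] := by
    rw [Matrix.inv_def, hdet, Ring.inverse_eq_inv']
    congr 1
    simp [covM, Matrix.adjugate_fin_two_of]
  simp only [quadF, hinv]
  simp [Matrix.mulVec, dotProduct, Fin.sum_univ_two]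
  field_simp
  ring

lemma det_pos (ρ t s : ℝ) (ht : 0 < t) (hs : 0 < s) (hρ2 : ρ^2 < 1) :
    0 < t * s - (ρ * min t s)^2 := by
  rcases le_total t s with h | h
  · rw [min_eq_left h]; nlinarith [mul_le_mul_of_nonneg_left h ht.le, mul_pos ht ht, sq_nonneg ρ]
  · rw [min_eq_right h]; nlinarith [mul_le_mul_of_nonneg_left h hs.le, mul_pos hs hs, sq_nonneg ρ]

lemma gFun_eq (μ₁ μ₂ ρ t s : ℝ) (ht : 0 < t) (hs : 0 < s) (hμ1 : 0 < μ₁)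
    (hμ2 : 0 < μ₂) (hρl : -1 < ρ) (hρu : ρ < 0) :
    gFun μ₁ μ₂ ρ t s = quadF ρ t s (1 + μ₁ * t) (1 + μ₂ * s) := by
  have hρ2 : ρ^2 < 1 := by nlinarith
  have hD := det_pos ρ t s ht hs hρ2
  have hm : 0 < min t s := lt_min ht hs
  have ha : (0:ℝ) < 1 + μ₁ * t := by nlinarith
  have hb : (0:ℝ) < 1 + μ₂ * s := by nlinarith
  apply IsLeast.csInf_eq
  constructor
  · exact ⟨1 + μ₁ * t, 1 + μ₂ * s, le_refl _, le_refl _, rfl⟩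
  · rintro q ⟨x, y, hx, hy, rfl⟩
    rw [quadF_eq ρ t s _ _ hD.ne', quadF_eq ρ t s _ _ hD.ne']
    rw [div_le_div_iff_of_pos_right hD]
    have hxy : (1 + μ₁ * t) * (1 + μ₂ * s) ≤ x * y :=
      mul_le_mul hx hy hb.le (ha.trans_le hx).le
    have hρm : ρ * min t s < 0 := mul_neg_of_neg_of_pos hρu hm
    nlinarith [mul_self_le_mul_self ha.le hx, mul_self_le_mul_self hb.le hy,
      mul_nonneg (neg_nonneg.mpr hρm.le) (sub_nonneg.mpr hxy)]

lemma case1 (μ₁ μ₂ ρ t s : ℝ) (hμ1 : 0 < μ₁) (hμ12 : μ₁ < μ₂)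
    (hρl : -1 < ρ) (hρu : ρ < 0) (ht : 0 < t) (hs : 0 < s) (hst : s ≤ t) :
    4*(μ₂+(1-2*ρ)*μ₁) ≤ quadF ρ t s (1 + μ₁ * t) (1 + μ₂ * s) ∧
    (quadF ρ t s (1 + μ₁ * t) (1 + μ₂ * s) = 4*(μ₂+(1-2*ρ)*μ₁) →
      t = (1-2*ρ)/μ₁ ∧ s = 1/(μ₂-2*ρ*μ₁)) := by
  have hρ2 : ρ^2 < 1 := by nlinarith
  have hD := det_pos ρ t s ht hs hρ2
  have hmin : min t s = s := min_eq_right hst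
  rw [quadF_eq ρ t s _ _ hD.ne', hmin]
  rw [hmin] at hD
  have htρ : 0 < t - ρ^2*s := by nlinarith
  have hid : s*(1 + μ₁ * t)^2 - 2*(ρ*s)*(1 + μ₁ * t)*(1 + μ₂ * s) + t*(1 + μ₂ * s)^2
      - (4*(μ₂+(1-2*ρ)*μ₁))*(t*s-(ρ*s)^2)
      = s*(((1+μ₁*t) - (2*μ₁*t + 2*ρ*s*(μ₂-2*ρ*μ₁)))
            - ρ*((1+μ₂*s) - (2*ρ*s*μ₁ + 2*s*(μ₂-2*ρ*μ₁))))^2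
        + (t-ρ^2*s)*((1+μ₂*s) - (2*ρ*s*μ₁ + 2*s*(μ₂-2*ρ*μ₁)))^2 := by ring
  constructor
  · rw [le_div_iff₀ hD]
    nlinarith [mul_nonneg hs.le (sq_nonneg (((1+μ₁*t) - (2*μ₁*t + 2*ρ*s*(μ₂-2*ρ*μ₁)))
        - ρ*((1+μ₂*s) - (2*ρ*s*μ₁ + 2*s*(μ₂-2*ρ*μ₁))))),
      mul_nonneg htρ.le (sq_nonneg ((1+μ₂*s) - (2*ρ*s*μ₁ + 2*s*(μ₂-2*ρ*μ₁))))]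
  · intro heq
    rw [div_eq_iff hD.ne'] at heq
    have hY : ((1+μ₂*s) - (2*ρ*s*μ₁ + 2*s*(μ₂-2*ρ*μ₁)))^2 = 0 := by
      nlinarith [mul_nonneg hs.le (sq_nonneg (((1+μ₁*t) - (2*μ₁*t + 2*ρ*s*(μ₂-2*ρ*μ₁)))
          - ρ*((1+μ₂*s) - (2*ρ*s*μ₁ + 2*s*(μ₂-2*ρ*μ₁))))),
        sq_nonneg ((1+μ₂*s) - (2*ρ*s*μ₁ + 2*s*(μ₂-2*ρ*μ₁)))]
    have hX : (((1+μ₁*t) - (2*μ₁*t + 2*ρ*s*(μ₂-2*ρ*μ₁)))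
          - ρ*((1+μ₂*s) - (2*ρ*s*μ₁ + 2*s*(μ₂-2*ρ*μ₁))))^2 = 0 := by
      nlinarith [mul_nonneg htρ.le (sq_nonneg ((1+μ₂*s) - (2*ρ*s*μ₁ + 2*s*(μ₂-2*ρ*μ₁)))),
        sq_nonneg (((1+μ₁*t) - (2*μ₁*t + 2*ρ*s*(μ₂-2*ρ*μ₁)))
          - ρ*((1+μ₂*s) - (2*ρ*s*μ₁ + 2*s*(μ₂-2*ρ*μ₁))))]
    have hY0 := pow_eq_zero_iff (n := 2) (by norm_num) |>.mp hY
    have hX0 := pow_eq_zero_iff (n := 2) (by norm_num) |>.mp hX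
    have hμd : 0 < μ₂ - 2*ρ*μ₁ := by nlinarith
    have hseq : s * (μ₂ - 2*ρ*μ₁) = 1 := by linear_combination -hY0
    constructor
    · rw [eq_div_iff hμ1.ne']
      linear_combination -hX0 - ρ*hY0 - 2*ρ*hseq
    · rw [eq_div_iff hμd.ne']
      exact hseq

lemma case2 (μ₁ μ₂ ρ t s : ℝ) (hμ1 : 0 < μ₁) (hμ12 : μ₁ < μ₂)
    (hρl : -1 < ρ) (hρu : ρ < 0) (ht : 0 < t) (hs : 0 < s) (hts : t ≤ s) :
    4*(μ₂+(1-2*ρ)*μ₁) < quadF ρ t s (1 + μ₁ * t) (1 + μ₂ * s) := by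
  have hρ2 : ρ^2 < 1 := by nlinarith
  have hD := det_pos ρ t s ht hs hρ2
  have hmin : min t s = t := min_eq_left hts
  rw [quadF_eq ρ t s _ _ hD.ne', hmin]
  rw [hmin] at hD
  have hsρ : 0 < s - ρ^2*t := by nlinarith
  have hid : s*(1 + μ₁ * t)^2 - 2*(ρ*t)*(1 + μ₁ * t)*(1 + μ₂ * s) + t*(1 + μ₂ * s)^2
      - (4*(μ₁+μ₂-2*ρ*μ₂))*(t*s-(ρ*t)^2)
      = t*(((1+μ₂*s) - (2*ρ*t*(μ₁-2*ρ*μ₂) + 2*s*μ₂))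
            - ρ*((1+μ₁*t) - (2*(μ₁-2*ρ*μ₂)*t + 2*ρ*t*μ₂)))^2
        + (s-ρ^2*t)*((1+μ₁*t) - (2*(μ₁-2*ρ*μ₂)*t + 2*ρ*t*μ₂))^2 := by ring
  have hCC : 4*(μ₂+(1-2*ρ)*μ₁) < 4*(μ₁+μ₂-2*ρ*μ₂) := by nlinarith
  have hle : 4*(μ₁+μ₂-2*ρ*μ₂) ≤ (s*(1 + μ₁ * t)^2 - 2*(ρ*t)*(1 + μ₁ * t)*(1 + μ₂ * s)
      + t*(1 + μ₂ * s)^2) / (t*s-(ρ*t)^2) := by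
    rw [le_div_iff₀ hD]
    nlinarith [mul_nonneg ht.le (sq_nonneg (((1+μ₂*s) - (2*ρ*t*(μ₁-2*ρ*μ₂) + 2*s*μ₂))
        - ρ*((1+μ₁*t) - (2*(μ₁-2*ρ*μ₂)*t + 2*ρ*t*μ₂)))),
      mul_nonneg hsρ.le (sq_nonneg ((1+μ₁*t) - (2*(μ₁-2*ρ*μ₂)*t + 2*ρ*t*μ₂)))]
  linarith

lemma value (μ₁ μ₂ ρ : ℝ) (hμ1 : 0 < μ₁) (hμ12 : μ₁ < μ₂)
    (hρl : -1 < ρ) (hρu : ρ < 0) :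
    quadF ρ ((1-2*ρ)/μ₁) (1/(μ₂-2*ρ*μ₁)) (1 + μ₁ * ((1-2*ρ)/μ₁))
      (1 + μ₂ * (1/(μ₂-2*ρ*μ₁))) = 4*(μ₂+(1-2*ρ)*μ₁) := by
  have hρ2 : ρ^2 < 1 := by nlinarith
  have hμd : 0 < μ₂ - 2*ρ*μ₁ := by nlinarith
  have htp : 0 < (1-2*ρ)/μ₁ := div_pos (by linarith) hμ1
  have hsp : 0 < 1/(μ₂-2*ρ*μ₁) := by positivity
  have hst : 1/(μ₂-2*ρ*μ₁) ≤ (1-2*ρ)/μ₁ := by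
    rw [div_le_div_iff₀ hμd hμ1]
    nlinarith
  have hD := det_pos ρ _ _ htp hsp hρ2
  have hmin : min ((1-2*ρ)/μ₁) (1/(μ₂-2*ρ*μ₁)) = 1/(μ₂-2*ρ*μ₁) := min_eq_right hst
  rw [quadF_eq _ _ _ _ _ hD.ne', hmin]
  rw [hmin] at hD
  rw [div_eq_iff hD.ne']
  field_simp
  ring

theorem stmt1 (μ₁ μ₂ ρ : ℝ) (hμ1 : 0 < μ₁) (hμ12 : μ₁ < μ₂)
    (hρl : -1 < ρ) (hρu : ρ < 0) :
    IsLeast { v : ℝ | ∃ t s : ℝ, 0 < t ∧ 0 < s ∧ v = gFun μ₁ μ₂ ρ t s }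
      (4 * (μ₂ + (1 - 2 * ρ) * μ₁)) ∧
    (gFun μ₁ μ₂ ρ ((1 - 2 * ρ) / μ₁) (1 / (μ₂ - 2 * ρ * μ₁))
        = 4 * (μ₂ + (1 - 2 * ρ) * μ₁)) ∧
    (∀ t s : ℝ, 0 < t → 0 < s →
      gFun μ₁ μ₂ ρ t s = 4 * (μ₂ + (1 - 2 * ρ) * μ₁) →
      t = (1 - 2 * ρ) / μ₁ ∧ s = 1 / (μ₂ - 2 * ρ * μ₁)) := by
  have hμ2 : 0 < μ₂ := hμ1.trans hμ12
  have hμd : 0 < μ₂ - 2*ρ*μ₁ := by nlinarith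
  have htp : 0 < (1-2*ρ)/μ₁ := div_pos (by linarith) hμ1
  have hsp : 0 < 1/(μ₂-2*ρ*μ₁) := by positivity
  have hval : gFun μ₁ μ₂ ρ ((1-2*ρ)/μ₁) (1/(μ₂-2*ρ*μ₁)) = 4*(μ₂+(1-2*ρ)*μ₁) := by
    rw [gFun_eq μ₁ μ₂ ρ _ _ htp hsp hμ1 hμ2 hρl hρu]
    exact value μ₁ μ₂ ρ hμ1 hμ12 hρl hρu
  have hvalC : gFun μ₁ μ₂ ρ ((1 - 2 * ρ) / μ₁) (1 / (μ₂ - 2 * ρ * μ₁))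
      = 4 * (μ₂ + (1 - 2 * ρ) * μ₁) := by
    convert hval using 3 <;> ring
  refine ⟨⟨⟨(1-2*ρ)/μ₁, 1/(μ₂-2*ρ*μ₁), htp, hsp, hvalC.symm⟩, ?_⟩, hvalC, ?_⟩
  · rintro v ⟨t, s, ht, hs, rfl⟩
    rw [gFun_eq μ₁ μ₂ ρ t s ht hs hμ1 hμ2 hρl hρu]
    rcases le_total s t with h | h
    · exact (case1 μ₁ μ₂ ρ t s hμ1 hμ12 hρl hρu ht hs h).1
    · exact (case2 μ₁ μ₂ ρ t s hμ1 hμ12 hρl hρu ht hs h).le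
  · intro t s ht hs heq
    rw [gFun_eq μ₁ μ₂ ρ t s ht hs hμ1 hμ2 hρl hρu] at heq
    rcases le_total s t with h | h
    · obtain ⟨h1, h2⟩ := (case1 μ₁ μ₂ ρ t s hμ1 hμ12 hρl hρu ht hs h).2 heq
      exact ⟨h1, h2⟩
    · have := case2 μ₁ μ₂ ρ t s hμ1 hμ12 hρl hρu ht hs h
      linarith
end

section
/- Suppose −1 < ρ < 0 and μ₂ + ρμ₁ − 2μ₂ρ² ≤ 0. Then the infimum of g₃(t,s) over the region B̄ = {(t,s) : 0 < t ≤ s} equals 4(μ₁+(1−2ρ)μ₂), and (1/(μ₁−2ρμ₂), (1−2ρ)/μ₂) is the unique minimizer of g₃ on B̄. -/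
open Matrix

/-- `g₃(t,s)`: the quadratic form at the corner point `(1+μ₁t, 1+μ₂s)`. -/
noncomputable def g3Fun (μ₁ μ₂ ρ t s : ℝ) : ℝ :=
  quadF ρ t s (1 + μ₁ * t) (1 + μ₂ * s)

lemma quad_eq' (ρ t s x y : ℝ) (hts : t ≤ s) (ht : t ≠ 0) (hu : s - ρ^2*t ≠ 0) :
    quadF ρ t s x y = (s*x^2 - 2*ρ*t*x*y + t*y^2) / (t*(s - ρ^2*t)) := by
  have hdet : (covM ρ t s).det = t * (s - ρ^2*t) := by
    simp [covM, Matrix.det_fin_two_of, min_eq_left hts]; ring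
  have hinv : (covM ρ t s)⁻¹ = (t*(s-ρ^2*t))⁻¹ • !![s, -(ρ*t); -(ρ*t), t] := by
    rw [Matrix.inv_def, hdet, Ring.inverse_eq_inv']
    congr 1
    simp [covM, Matrix.adjugate_fin_two_of, min_eq_left hts]
  rw [quadF, hinv]
  simp [Matrix.mulVec, dotProduct, Fin.sum_univ_two, Matrix.smul_apply]
  field_simp
  ring

theorem stmt11 (μ₁ μ₂ ρ : ℝ) (hμ1 : 0 < μ₁) (hμ12 : μ₁ ≤ μ₂)
    (hρl : -1 < ρ) (hρu : ρ < 0)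
    (hcond : μ₂ + ρ * μ₁ - 2 * μ₂ * ρ ^ 2 ≤ 0) :
    IsLeast { v : ℝ | ∃ t s : ℝ, 0 < t ∧ t ≤ s ∧ v = g3Fun μ₁ μ₂ ρ t s }
      (4 * (μ₁ + (1 - 2 * ρ) * μ₂)) ∧
    (g3Fun μ₁ μ₂ ρ (1 / (μ₁ - 2 * ρ * μ₂)) ((1 - 2 * ρ) / μ₂)
        = 4 * (μ₁ + (1 - 2 * ρ) * μ₂)) ∧
    (∀ t s : ℝ, 0 < t → t ≤ s →
      g3Fun μ₁ μ₂ ρ t s = 4 * (μ₁ + (1 - 2 * ρ) * μ₂) →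
      t = 1 / (μ₁ - 2 * ρ * μ₂) ∧ s = (1 - 2 * ρ) / μ₂) := by
  have hμ2 : 0 < μ₂ := lt_of_lt_of_le hμ1 hμ12
  have hρ2 : ρ^2 < 1 := by nlinarith
  have hα : 0 < μ₁ - 2 * ρ * μ₂ := by nlinarith
  -- key identity
  have key : ∀ t s : ℝ, 0 < t → t ≤ s →
      g3Fun μ₁ μ₂ ρ t s = 4 * (μ₁ + (1 - 2 * ρ) * μ₂)
        + (1 - (μ₁ - 2*ρ*μ₂)*t)^2 / t
        + ((1-ρ) + (μ₂*ρ^2 - ρ*μ₁)*t - μ₂*(s - ρ^2*t))^2 / (s - ρ^2*t) := by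
    intro t s ht hts
    have hu : 0 < s - ρ^2*t := by nlinarith
    rw [g3Fun, quad_eq' ρ t s _ _ hts ht.ne' hu.ne']
    have hu' : s - ρ^2*t ≠ 0 := hu.ne'
    rw [add_assoc, div_add_div _ _ ht.ne' hu', add_div' _ _ _ (mul_ne_zero ht.ne' hu'), div_eq_div_iff (mul_ne_zero ht.ne' hu') (mul_ne_zero ht.ne' hu')]
    ring
  have hpt : (0:ℝ) < 1/(μ₁ - 2*ρ*μ₂) := by positivity
  have hps : 1/(μ₁ - 2*ρ*μ₂) ≤ (1 - 2*ρ)/μ₂ := by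
    rw [div_le_div_iff₀ hα hμ2]
    nlinarith [mul_pos (neg_pos.2 hρu) hμ2]
  have hval : g3Fun μ₁ μ₂ ρ (1/(μ₁ - 2*ρ*μ₂)) ((1 - 2*ρ)/μ₂)
      = 4 * (μ₁ + (1 - 2 * ρ) * μ₂) := by
    rw [key _ _ hpt hps]
    have h1 : 1 - (μ₁ - 2*ρ*μ₂) * (1/(μ₁ - 2*ρ*μ₂)) = 0 := by
      field_simp
      ring
    have h2 : (1-ρ) + (μ₂*ρ^2 - ρ*μ₁)*(1/(μ₁ - 2*ρ*μ₂))
        - μ₂*((1 - 2*ρ)/μ₂ - ρ^2*(1/(μ₁ - 2*ρ*μ₂))) = 0 := by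
      have hα' : μ₁ - 2*ρ*μ₂ ≠ 0 := hα.ne'
      have e : (μ₁ - 2*ρ*μ₂) * (1/(μ₁ - 2*ρ*μ₂)) = 1 := mul_one_div_cancel hα'
      have e2 : μ₂*((1-2*ρ)/μ₂) = 1-2*ρ := mul_div_cancel₀ _ hμ2.ne'
      linear_combination (-ρ) * e - e2
    rw [h1, h2]
    simp
  refine ⟨⟨⟨1/(μ₁ - 2*ρ*μ₂), (1 - 2*ρ)/μ₂, hpt, hps, hval.symm⟩, ?_⟩, hval, ?_⟩
  · rintro v ⟨t, s, ht, hts, rfl⟩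
    have hu : 0 < s - ρ^2*t := by nlinarith
    rw [key t s ht hts]
    have h1 : 0 ≤ (1 - (μ₁ - 2*ρ*μ₂)*t)^2 / t := by positivity
    have h2 : 0 ≤ ((1-ρ) + (μ₂*ρ^2 - ρ*μ₁)*t - μ₂*(s - ρ^2*t))^2 / (s - ρ^2*t) := by
      positivity
    linarith
  · intro t s ht hts heq
    have hu : 0 < s - ρ^2*t := by nlinarith
    rw [key t s ht hts] at heq
    have h1 : 0 ≤ (1 - (μ₁ - 2*ρ*μ₂)*t)^2 / t := by positivity
    have h2 : 0 ≤ ((1-ρ) + (μ₂*ρ^2 - ρ*μ₁)*t - μ₂*(s - ρ^2*t))^2 / (s - ρ^2*t) := by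
      positivity
    have e1 : (1 - (μ₁ - 2*ρ*μ₂)*t)^2 / t = 0 := by linarith
    have e2 : ((1-ρ) + (μ₂*ρ^2 - ρ*μ₁)*t - μ₂*(s - ρ^2*t))^2 / (s - ρ^2*t) = 0 := by
      linarith
    have q1 : 1 - (μ₁ - 2*ρ*μ₂)*t = 0 := by
      have := (div_eq_zero_iff.1 e1).resolve_right ht.ne'
      exact pow_eq_zero_iff (n := 2) (by norm_num) |>.1 this
    have q2 : (1-ρ) + (μ₂*ρ^2 - ρ*μ₁)*t - μ₂*(s - ρ^2*t) = 0 := by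
      have := (div_eq_zero_iff.1 e2).resolve_right hu.ne'
      exact pow_eq_zero_iff (n := 2) (by norm_num) |>.1 this
    have hαt : (μ₁ - 2*ρ*μ₂) * t = 1 := by linarith
    constructor
    · rw [eq_div_iff hα.ne']
      linarith [hαt]
    · rw [eq_div_iff hμ2.ne']
      linear_combination -q2 - ρ * hαt
end

section
/- The function ρ ↦ t*(ρ) = √(2(1−ρ)/(μ₁²+μ₂²−2ρμ₁μ₂)) is nonincreasing on [0,1), and is strictly decreasing there when μ₁ < μ₂. Moreover, if μ₁ < μ₂, then both ρ ↦ t_B(ρ) = 1/(2ρμ₂−μ₁) and ρ ↦ s₁*(ρ) = (1−ρ)/(ρμ₂−μ₁) are strictly decreasing on the interval (μ₁/μ₂, 1). -/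
noncomputable def tStar (μ₁ μ₂ ρ : ℝ) : ℝ :=
  Real.sqrt (2 * (1 - ρ) / (μ₁ ^ 2 + μ₂ ^ 2 - 2 * ρ * μ₁ * μ₂))

noncomputable def tB (μ₁ μ₂ ρ : ℝ) : ℝ := 1 / (2 * ρ * μ₂ - μ₁)

noncomputable def s1Star (μ₁ μ₂ ρ : ℝ) : ℝ := (1 - ρ) / (ρ * μ₂ - μ₁)

theorem stmt12 (μ₁ μ₂ : ℝ) (hμ1 : 0 < μ₁) (hμ12 : μ₁ ≤ μ₂) :
    (∀ ρ₁ ρ₂ : ℝ, 0 ≤ ρ₁ → ρ₁ ≤ ρ₂ → ρ₂ < 1 → tStar μ₁ μ₂ ρ₂ ≤ tStar μ₁ μ₂ ρ₁) ∧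
    (μ₁ < μ₂ → ∀ ρ₁ ρ₂ : ℝ, 0 ≤ ρ₁ → ρ₁ < ρ₂ → ρ₂ < 1 →
      tStar μ₁ μ₂ ρ₂ < tStar μ₁ μ₂ ρ₁) ∧
    (μ₁ < μ₂ → ∀ ρ₁ ρ₂ : ℝ, μ₁ / μ₂ < ρ₁ → ρ₁ < ρ₂ → ρ₂ < 1 →
      tB μ₁ μ₂ ρ₂ < tB μ₁ μ₂ ρ₁) ∧
    (μ₁ < μ₂ → ∀ ρ₁ ρ₂ : ℝ, μ₁ / μ₂ < ρ₁ → ρ₁ < ρ₂ → ρ₂ < 1 →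
      s1Star μ₁ μ₂ ρ₂ < s1Star μ₁ μ₂ ρ₁) := by
  have hμ2 : 0 < μ₂ := lt_of_lt_of_le hμ1 hμ12
  have hD : ∀ ρ : ℝ, ρ < 1 → 0 < μ₁ ^ 2 + μ₂ ^ 2 - 2 * ρ * μ₁ * μ₂ := by
    intro ρ hρ
    nlinarith [sq_nonneg (μ₁ - μ₂), mul_pos hμ1 hμ2]
  refine ⟨?_, ?_, ?_, ?_⟩
  · intro ρ₁ ρ₂ h0 h12 h21
    have h11 : ρ₁ < 1 := lt_of_le_of_lt h12 h21
    apply Real.sqrt_le_sqrt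
    rw [div_le_div_iff₀ (hD ρ₂ h21) (hD ρ₁ h11)]
    nlinarith [sq_nonneg (μ₁ - μ₂)]
  · intro hlt ρ₁ ρ₂ h0 h12 h21
    have h11 : ρ₁ < 1 := h12.trans h21
    apply Real.sqrt_lt_sqrt
    · exact div_nonneg (by linarith) (hD ρ₂ h21).le
    · rw [div_lt_div_iff₀ (hD ρ₂ h21) (hD ρ₁ h11)]
      nlinarith [sq_nonneg (μ₁ - μ₂), mul_pos (sub_pos.2 h12) (mul_pos (sub_pos.2 hlt) (sub_pos.2 hlt))]
  · intro hlt ρ₁ ρ₂ hr1 h12 h21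
    have hr1' : μ₁ < ρ₁ * μ₂ := by
      rw [div_lt_iff₀ hμ2] at hr1; linarith
    have hd1 : 0 < 2 * ρ₁ * μ₂ - μ₁ := by linarith
    have hd2 : 0 < 2 * ρ₂ * μ₂ - μ₁ := by nlinarith
    unfold tB
    apply one_div_lt_one_div_of_lt hd1
    nlinarith
  · intro hlt ρ₁ ρ₂ hr1 h12 h21
    have hr1' : μ₁ < ρ₁ * μ₂ := by
      rw [div_lt_iff₀ hμ2] at hr1; linarith
    have hd1 : 0 < ρ₁ * μ₂ - μ₁ := by linarith
    have hd2 : 0 < ρ₂ * μ₂ - μ₁ := by nlinarith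
    unfold s1Star
    rw [div_lt_div_iff₀ hd2 hd1]
    nlinarith
end

section
/- Suppose 0 ≤ ρ and ρμ₂ ≤ μ₁. Then t*(ρ) ≥ t**(ρ), and (1−ρ)·|μ₁−2ρμ₂| ≤ μ₂+ρμ₁−2μ₂ρ² (i.e., t_B(ρ) = 1/|μ₁−2ρμ₂| ≥ t**(ρ) whenever μ₁ ≠ 2ρμ₂). In each inequality, equality holds only when ρ = 0 and μ₁ = μ₂. -/
noncomputable def tDStar (μ₁ μ₂ ρ : ℝ) : ℝ :=
  (1 - ρ) / (μ₂ + ρ * μ₁ - 2 * μ₂ * ρ ^ 2)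

lemma key_le (μ₁ μ₂ ρ : ℝ) (hμ1 : 0 < μ₁) (hμ12 : μ₁ ≤ μ₂)
    (hρu : ρ < 1) (hρ0 : 0 ≤ ρ) (hρμ : ρ * μ₂ ≤ μ₁) :
    (1 - ρ) * (μ₁ ^ 2 + μ₂ ^ 2 - 2 * ρ * μ₁ * μ₂) ≤ 2 * (μ₂ + ρ * μ₁ - 2 * μ₂ * ρ ^ 2) ^ 2 := by
  nlinarith [mul_nonneg hρ0 (sub_nonneg.mpr hρμ), sq_nonneg (μ₂ - μ₁),
    mul_pos hμ1 (hμ1.trans_le hμ12), mul_nonneg (sub_nonneg.mpr hμ12) (sub_nonneg.mpr hρμ),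
    mul_nonneg (mul_nonneg hρ0 hρ0) (sub_nonneg.mpr hρμ), sq_nonneg (1 - ρ),
    mul_nonneg hρ0 (sq_nonneg (1 - ρ)), mul_pos (hμ1.trans_le hμ12) (hμ1.trans_le hμ12),
    mul_nonneg (mul_nonneg hρ0 (sub_nonneg.mpr hμ12)) (sub_nonneg.mpr hρμ)]

lemma key_lt (μ₁ μ₂ ρ : ℝ) (hμ1 : 0 < μ₁) (hμ12 : μ₁ ≤ μ₂)
    (hρu : ρ < 1) (hρpos : 0 < ρ) (hρμ : ρ * μ₂ ≤ μ₁) :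
    (1 - ρ) * (μ₁ ^ 2 + μ₂ ^ 2 - 2 * ρ * μ₁ * μ₂) < 2 * (μ₂ + ρ * μ₁ - 2 * μ₂ * ρ ^ 2) ^ 2 := by
  nlinarith [mul_nonneg hρpos.le (sub_nonneg.mpr hρμ), sq_nonneg (μ₂ - μ₁),
    mul_pos hμ1 (hμ1.trans_le hμ12), mul_nonneg (sub_nonneg.mpr hμ12) (sub_nonneg.mpr hρμ),
    mul_nonneg (mul_nonneg hρpos.le hρpos.le) (sub_nonneg.mpr hρμ),
    mul_pos hρpos (mul_pos (mul_pos (sub_pos.mpr hρu) (sub_pos.mpr hρu)) (mul_pos hμ1 hμ1)),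
    mul_nonneg (mul_nonneg hρpos.le (sub_nonneg.mpr hμ12)) (sub_nonneg.mpr hρμ)]

theorem stmt13 (μ₁ μ₂ ρ : ℝ) (hμ1 : 0 < μ₁) (hμ12 : μ₁ ≤ μ₂)
    (hρl : -1 < ρ) (hρu : ρ < 1) (hρ0 : 0 ≤ ρ) (hρμ : ρ * μ₂ ≤ μ₁) :
    tDStar μ₁ μ₂ ρ ≤ tStar μ₁ μ₂ ρ ∧
    (1 - ρ) * |μ₁ - 2 * ρ * μ₂| ≤ μ₂ + ρ * μ₁ - 2 * μ₂ * ρ ^ 2 ∧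
    (μ₁ ≠ 2 * ρ * μ₂ → tDStar μ₁ μ₂ ρ ≤ 1 / |μ₁ - 2 * ρ * μ₂|) ∧
    (tDStar μ₁ μ₂ ρ = tStar μ₁ μ₂ ρ → ρ = 0 ∧ μ₁ = μ₂) ∧
    ((1 - ρ) * |μ₁ - 2 * ρ * μ₂| = μ₂ + ρ * μ₁ - 2 * μ₂ * ρ ^ 2 → ρ = 0 ∧ μ₁ = μ₂) := by
  have hμ2 : 0 < μ₂ := hμ1.trans_le hμ12
  have hs : 0 < 1 - ρ := by linarith
  have ha : 0 ≤ μ₁ - ρ * μ₂ := sub_nonneg.mpr hρμ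
  have hD : 0 < μ₂ + ρ * μ₁ - 2 * μ₂ * ρ ^ 2 := by
    nlinarith [mul_nonneg hρ0 ha, mul_pos hμ2 (mul_pos hs (by linarith : (0:ℝ) < 1 + ρ))]
  have hQ : 0 < μ₁ ^ 2 + μ₂ ^ 2 - 2 * ρ * μ₁ * μ₂ := by
    nlinarith [sq_nonneg (μ₁ - μ₂), mul_pos (mul_pos hs hμ1) hμ2]
  have key := key_le μ₁ μ₂ ρ hμ1 hμ12 hρu hρ0 hρμ
  have hsq : ((1 - ρ) / (μ₂ + ρ * μ₁ - 2 * μ₂ * ρ ^ 2)) ^ 2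
      ≤ 2 * (1 - ρ) / (μ₁ ^ 2 + μ₂ ^ 2 - 2 * ρ * μ₁ * μ₂) := by
    rw [div_pow, div_le_div_iff₀ (by positivity) hQ]
    nlinarith [mul_le_mul_of_nonneg_left key hs.le]
  have part1 : tDStar μ₁ μ₂ ρ ≤ tStar μ₁ μ₂ ρ := by
    unfold tDStar tStar
    exact (Real.le_sqrt (by positivity) (by positivity)).mpr hsq
  have part2 : (1 - ρ) * |μ₁ - 2 * ρ * μ₂| ≤ μ₂ + ρ * μ₁ - 2 * μ₂ * ρ ^ 2 := by
    rcases abs_cases (μ₁ - 2 * ρ * μ₂) with ⟨h, h'⟩ | ⟨h, h'⟩ <;> rw [h]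
    · nlinarith [mul_nonneg hρ0 ha, mul_nonneg hρ0 (mul_nonneg hs.le hμ2.le)]
    · nlinarith [mul_lt_mul_of_pos_right hρu hμ2]
  have part3 : μ₁ ≠ 2 * ρ * μ₂ → tDStar μ₁ μ₂ ρ ≤ 1 / |μ₁ - 2 * ρ * μ₂| := by
    intro hne
    have hx : 0 < |μ₁ - 2 * ρ * μ₂| := abs_pos.mpr (sub_ne_zero.mpr hne)
    unfold tDStar
    rw [div_le_div_iff₀ hD hx]
    linarith [part2]
  refine ⟨part1, part2, part3, ?_, ?_⟩
  · intro heq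
    unfold tDStar tStar at heq
    have h2 : ((1 - ρ) / (μ₂ + ρ * μ₁ - 2 * μ₂ * ρ ^ 2)) ^ 2
        = 2 * (1 - ρ) / (μ₁ ^ 2 + μ₂ ^ 2 - 2 * ρ * μ₁ * μ₂) := by
      rw [heq]; exact Real.sq_sqrt (by positivity)
    rw [div_pow, div_eq_div_iff (by positivity) hQ.ne'] at h2
    have hE : (1 - ρ) * (μ₁ ^ 2 + μ₂ ^ 2 - 2 * ρ * μ₁ * μ₂)
        = 2 * (μ₂ + ρ * μ₁ - 2 * μ₂ * ρ ^ 2) ^ 2 := by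
      exact mul_left_cancel₀ hs.ne' (by linear_combination h2)
    have hρz : ρ = 0 := by
      by_contra h
      exact absurd hE (key_lt μ₁ μ₂ ρ hμ1 hμ12 hρu (hρ0.lt_of_ne (Ne.symm h)) hρμ).ne
    subst hρz
    refine ⟨rfl, le_antisymm hμ12 ?_⟩
    nlinarith [hE]
  · intro heq
    rcases abs_cases (μ₁ - 2 * ρ * μ₂) with ⟨h, h'⟩ | ⟨h, h'⟩ <;> rw [h] at heq
    · have hρz : ρ = 0 := by
        by_contra hne
        have hρpos : 0 < ρ := hρ0.lt_of_ne (Ne.symm hne)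
        nlinarith [mul_nonneg hρpos.le ha, mul_pos hρpos (mul_pos hs hμ2)]
      subst hρz
      refine ⟨rfl, ?_⟩
      norm_num at heq
      linarith
    · exfalso
      have h3 : ρ * μ₂ < 1 * μ₂ := mul_lt_mul_of_pos_right hρu hμ2
      nlinarith [h3]
end

section
/- Suppose μ₁ < μ₂. Then t*(ρ̂₂) = t_B(ρ̂₂) = s₁*(ρ̂₂) = t**(ρ̂₂) = 1/μ₂. Moreover, for all ρ ∈ (μ₁/μ₂, ρ̂₂) one has t*(ρ) < s₁*(ρ) and t_B(ρ) < s₁*(ρ), while for all ρ ∈ (ρ̂₂, 1) one has t*(ρ) > s₁*(ρ) and t_B(ρ) > s₁*(ρ). -/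
theorem stmt14 (μ₁ μ₂ : ℝ) (hμ1 : 0 < μ₁) (hμ12 : μ₁ < μ₂) :
    (tStar μ₁ μ₂ ((μ₁ + μ₂) / (2 * μ₂)) = 1 / μ₂ ∧
     tB μ₁ μ₂ ((μ₁ + μ₂) / (2 * μ₂)) = 1 / μ₂ ∧
     s1Star μ₁ μ₂ ((μ₁ + μ₂) / (2 * μ₂)) = 1 / μ₂ ∧
     tDStar μ₁ μ₂ ((μ₁ + μ₂) / (2 * μ₂)) = 1 / μ₂) ∧
    (∀ ρ : ℝ, μ₁ / μ₂ < ρ → ρ < (μ₁ + μ₂) / (2 * μ₂) →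
      tStar μ₁ μ₂ ρ < s1Star μ₁ μ₂ ρ ∧ tB μ₁ μ₂ ρ < s1Star μ₁ μ₂ ρ) ∧
    (∀ ρ : ℝ, (μ₁ + μ₂) / (2 * μ₂) < ρ → ρ < 1 →
      s1Star μ₁ μ₂ ρ < tStar μ₁ μ₂ ρ ∧ s1Star μ₁ μ₂ ρ < tB μ₁ μ₂ ρ) := by
  have hμ2 : 0 < μ₂ := hμ1.trans hμ12
  have hμ2' : μ₂ ≠ 0 := ne_of_gt hμ2
  have hd : (0:ℝ) < μ₂ - μ₁ := by linarith
  refine ⟨⟨?_, ?_, ?_, ?_⟩, ?_, ?_⟩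
  · -- tStar at ρ̂
    unfold tStar
    have harg : 2 * (1 - (μ₁ + μ₂) / (2 * μ₂)) /
        (μ₁ ^ 2 + μ₂ ^ 2 - 2 * ((μ₁ + μ₂) / (2 * μ₂)) * μ₁ * μ₂) = (1 / μ₂) ^ 2 := by
      have hD : μ₁ ^ 2 + μ₂ ^ 2 - 2 * ((μ₁ + μ₂) / (2 * μ₂)) * μ₁ * μ₂ = μ₂ * (μ₂ - μ₁) := by
        field_simp; ring
      have hN : 2 * (1 - (μ₁ + μ₂) / (2 * μ₂)) = (μ₂ - μ₁) / μ₂ := by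
        field_simp; ring
      rw [hD, hN]
      field_simp
    rw [harg, Real.sqrt_sq (by positivity)]
  · unfold tB
    rw [div_eq_div_iff (by field_simp; nlinarith) hμ2']
    field_simp
    ring
  · unfold s1Star
    have hden : (μ₁ + μ₂) / (2 * μ₂) * μ₂ - μ₁ = (μ₂ - μ₁) / 2 := by field_simp; ring
    rw [hden, div_eq_div_iff (by positivity) hμ2']
    field_simp
    ring
  · unfold tDStar
    have hden : μ₂ + (μ₁ + μ₂) / (2 * μ₂) * μ₁ - 2 * μ₂ * ((μ₁ + μ₂) / (2 * μ₂)) ^ 2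
        = (μ₂ - μ₁) / 2 := by field_simp; ring
    rw [hden, div_eq_div_iff (by positivity) hμ2']
    field_simp
    ring
  · -- ρ ∈ (μ₁/μ₂, ρ̂)
    intro ρ h1 h2
    rw [div_lt_iff₀ hμ2] at h1
    rw [lt_div_iff₀ (by positivity : (0:ℝ) < 2 * μ₂)] at h2
    have hρμ : μ₁ < ρ * μ₂ := by linarith
    have hrhat : ρ * (2 * μ₂) < μ₁ + μ₂ := h2
    have hρ1 : ρ < 1 := by nlinarith
    have hρ0 : 0 < ρ := by nlinarith
    have hs1 : 0 < ρ * μ₂ - μ₁ := by linarith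
    have hs1' : 0 < s1Star μ₁ μ₂ ρ := by
      unfold s1Star; exact div_pos (by linarith) hs1
    have hD : 0 < μ₁ ^ 2 + μ₂ ^ 2 - 2 * ρ * μ₁ * μ₂ := by nlinarith
    constructor
    · unfold tStar
      rw [Real.sqrt_lt' hs1']
      unfold s1Star
      rw [div_pow, div_lt_div_iff₀ hD (by positivity)]
      have key : 0 < (1 - ρ) * ((μ₂ - μ₁) * (2 * μ₂ * ((μ₁ + μ₂ - 2 * ρ * μ₂) * (ρ + 1)))) := by
        apply mul_pos (by linarith)
        apply mul_pos hd
        apply mul_pos (by positivity)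
        apply mul_pos (by linarith) (by linarith)
      nlinarith [key]
    · unfold tB s1Star
      rw [div_lt_div_iff₀ (by linarith) hs1]
      nlinarith
  · -- second range
    intro ρ h1 h2
    rw [div_lt_iff₀ (by positivity : (0:ℝ) < 2 * μ₂)] at h1
    have hrhat : μ₁ + μ₂ < ρ * (2 * μ₂) := h1
    have hρμ : μ₁ < ρ * μ₂ := by nlinarith
    have hρ0 : 0 < ρ := by nlinarith
    have hs1 : 0 < ρ * μ₂ - μ₁ := by linarith
    have hs1' : 0 ≤ s1Star μ₁ μ₂ ρ := by
      unfold s1Star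
      apply div_nonneg (by linarith) hs1.le
    have hD : 0 < μ₁ ^ 2 + μ₂ ^ 2 - 2 * ρ * μ₁ * μ₂ := by nlinarith
    constructor
    · unfold tStar
      rw [Real.lt_sqrt hs1']
      unfold s1Star
      rw [div_pow, div_lt_div_iff₀ (by positivity) hD]
      have key : 0 < (1 - ρ) * ((μ₂ - μ₁) * (2 * μ₂ * ((2 * ρ * μ₂ - μ₁ - μ₂) * (ρ + 1)))) := by
        apply mul_pos (by linarith)
        apply mul_pos hd
        apply mul_pos (by positivity)
        apply mul_pos (by linarith) (by linarith)
      nlinarith [key]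
    · unfold tB s1Star
      rw [div_lt_div_iff₀ hs1 (by linarith)]
      nlinarith
end

section
/- Suppose ρ̂₂ < ρ < 1 (which forces μ₁ < μ₂). Then the infimum of g(t,s) over the region B̄ = {(t,s) : 0 < t ≤ s} equals g₂(1/μ₂) = 4μ₂. -/
open Matrix

/-- `g₂(s) = (1+μ₂s)²/s`. -/
noncomputable def g2Fun (μ₂ s : ℝ) : ℝ := (1 + μ₂ * s) ^ 2 / s

lemma quad_eval (ρ t s x y : ℝ) (h : t ≤ s) (hd : t * s - ρ^2 * t^2 ≠ 0) :
    quadF ρ t s x y = (s*x^2 - 2*ρ*t*x*y + t*y^2) / (t*s - ρ^2*t^2) := by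
  have hm : min t s = t := min_eq_left h
  have hd2 : s * t - ρ^2 * t^2 ≠ 0 := by rw [mul_comm]; exact hd
  have key : (s * t - ρ^2 * t^2) * (s * t - ρ^2 * t^2)⁻¹ = 1 := mul_inv_cancel₀ hd2
  rw [eq_div_iff hd]
  simp [quadF, covM, hm, Matrix.inv_def, Matrix.adjugate_fin_two_of,
    Matrix.det_fin_two_of, Ring.inverse_eq_inv', Matrix.mulVec,
    dotProduct, Fin.sum_univ_two]
  linear_combination (s*x^2 - 2*ρ*t*x*y + t*y^2) * key

lemma quad_lb (μ₁ μ₂ ρ t s x y : ℝ) (hμ1 : 0 < μ₁) (hμ12 : μ₁ ≤ μ₂)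
    (hρu : ρ^2 < 1) (ht : 0 < t) (hts : t ≤ s)
    (hx : 1 + μ₁ * t ≤ x) (hy : 1 + μ₂ * s ≤ y) :
    4 * μ₂ ≤ quadF ρ t s x y := by
  have hs : 0 < s := lt_of_lt_of_le ht hts
  have hμ2 : 0 < μ₂ := lt_of_lt_of_le hμ1 hμ12
  have hd : 0 < t * s - ρ^2 * t^2 := by nlinarith [mul_pos ht ht, mul_le_mul_of_nonneg_left hts (le_of_lt ht)]
  rw [quad_eval ρ t s x y hts (ne_of_gt hd)]
  rw [le_div_iff₀ hd]
  have hy0 : 1 + μ₂ * s ≤ y := hy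
  have h1 : 4 * μ₂ * s ≤ y^2 := by nlinarith [sq_nonneg (1 - μ₂ * s), sq_nonneg y]
  nlinarith [sq_nonneg (s * x - ρ * t * y), mul_pos ht hs, sq_nonneg (1 - μ₂*s)]

theorem stmt16 (μ₁ μ₂ ρ : ℝ) (hμ1 : 0 < μ₁) (hμ12 : μ₁ ≤ μ₂)
    (hρl : -1 < ρ) (hρu : ρ < 1) (hρ2 : (μ₁ + μ₂) / (2 * μ₂) < ρ) :
    IsGLB { v : ℝ | ∃ t s : ℝ, 0 < t ∧ t ≤ s ∧ v = gFun μ₁ μ₂ ρ t s } (4 * μ₂) ∧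
    g2Fun μ₂ (1 / μ₂) = 4 * μ₂ := by
  have hμ2 : 0 < μ₂ := lt_of_lt_of_le hμ1 hμ12
  have hρsq : ρ^2 < 1 := by
    have := abs_lt.mpr ⟨hρl, hρu⟩
    nlinarith [abs_nonneg ρ, sq_abs ρ]
  constructor
  · constructor
    · -- lower bound
      rintro v ⟨t, s, ht, hts, rfl⟩
      apply le_csInf
      · exact ⟨quadF ρ t s (1 + μ₁*t) (1 + μ₂*s), _, _, le_refl _, le_refl _, rfl⟩
      · rintro q ⟨x, y, hx, hy, rfl⟩
        exact quad_lb μ₁ μ₂ ρ t s x y hμ1 hμ12 hρsq ht hts hx hy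
    · -- greatest lower bound: 4μ₂ is attained at t = s = 1/μ₂
      intro b hb
      have hmem : gFun μ₁ μ₂ ρ (1/μ₂) (1/μ₂) = 4 * μ₂ := by
        have hs : (0:ℝ) < 1/μ₂ := by positivity
        apply le_antisymm
        · -- sInf ≤ 4μ₂ : witness x = 2ρ, y = 2
          have hρpos : 0 < ρ := lt_trans (by positivity) hρ2
          have hxfeas : 1 + μ₁ * (1/μ₂) ≤ 2 * ρ := by
            rw [div_lt_iff₀ (by positivity)] at hρ2
            have he : 1 + μ₁ * (1/μ₂) = (μ₂ + μ₁)/μ₂ := by field_simp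
            rw [he, div_le_iff₀ hμ2]
            nlinarith
          have hval : quadF ρ (1/μ₂) (1/μ₂) (2*ρ) 2 = 4 * μ₂ := by
            have hd : (1/μ₂) * (1/μ₂) - ρ^2 * (1/μ₂)^2 ≠ 0 := by
              have : (1/μ₂)*(1/μ₂) - ρ^2*(1/μ₂)^2 = (1 - ρ^2) * (1/μ₂)^2 := by ring
              rw [this]
              exact ne_of_gt (mul_pos (by linarith) (by positivity))
            rw [quad_eval ρ (1/μ₂) (1/μ₂) (2*ρ) 2 le_rfl hd]
            rw [div_eq_iff hd]
            field_simp
            ring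
          apply csInf_le
          · -- bdd below
            refine ⟨4 * μ₂, ?_⟩
            rintro q ⟨x, y, hx, hy, rfl⟩
            exact quad_lb μ₁ μ₂ ρ _ _ x y hμ1 hμ12 hρsq hs le_rfl hx hy
          · refine ⟨2*ρ, 2, hxfeas, ?_, hval.symm⟩
            have : μ₂ * (1/μ₂) = 1 := by field_simp
            rw [this]; norm_num
        · apply le_csInf
          · exact ⟨quadF ρ (1/μ₂) (1/μ₂) (1 + μ₁*(1/μ₂)) (1 + μ₂*(1/μ₂)), _, _, le_refl _, le_refl _, rfl⟩
          · rintro q ⟨x, y, hx, hy, rfl⟩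
            exact quad_lb μ₁ μ₂ ρ _ _ x y hμ1 hμ12 hρsq hs le_rfl hx hy
      have : 4 * μ₂ ∈ { v : ℝ | ∃ t s : ℝ, 0 < t ∧ t ≤ s ∧ v = gFun μ₁ μ₂ ρ t s } :=
        ⟨1/μ₂, 1/μ₂, by positivity, le_rfl, hmem.symm⟩
      exact hb this
  · unfold g2Fun
    rw [div_eq_iff (by positivity : (1:ℝ)/μ₂ ≠ 0)]
    field_simp
    ring
end
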